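/- Let G be a projective system corresponding to an [n,k,d]_q A^sMDS code with k ≥ 3, s > 0. If some (k−3)-flat Λ of PG(k−1,q) meets G in k−2+a points (counted with multiplicity), a ≥ 0, then n ≤ (s+1−a)(q+1) + k − 2 + a. -/

import Mathlib

noncomputable def psiAux (F : Type*) [Field F] (t : Option F) : (Fin 2 → F) →ₗ[F] F :=
  t.elim (LinearMap.proj 1) (fun c => LinearMap.proj 0 - c • LinearMap.proj 1)

lemma psiAux_none {F : Type*} [Field F] (v : Fin 2 → F) : psiAux F none v = v 1 := rfl

lemma psiAux_some {F : Type*} [Field F] (c : F) (v : Fin 2 → F) :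
    psiAux F (some c) v = v 0 - c * v 1 := rfl

noncomputable def clsAux {F : Type*} [Field F] [DecidableEq F] (v : Fin 2 → F) : Option F :=
  if v 1 = 0 then none else some (v 0 / v 1)

lemma psiAux_zero_iff {F : Type*} [Field F] [DecidableEq F] {v : Fin 2 → F} (hv : v ≠ 0)
    (t : Option F) : psiAux F t v = 0 ↔ clsAux v = t := by
  have hv' : v 0 ≠ 0 ∨ v 1 ≠ 0 := by
    by_contra h
    push_neg at h
    apply hv
    funext j
    fin_cases j <;> simp [h.1, h.2]
  cases t with
  | none =>
    rw [psiAux_none]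
    unfold clsAux
    by_cases h1 : v 1 = 0 <;> simp [h1]
  | some c =>
    rw [psiAux_some]
    unfold clsAux
    by_cases h1 : v 1 = 0
    · have h0 : v 0 ≠ 0 := by tauto
      simp [h1, h0]
    · simp only [h1, if_neg, if_false]
      constructor
      · intro h
        have : v 0 = c * v 1 := sub_eq_zero.mp h
        simp [this, h1, mul_div_assoc, div_self h1]
      · intro h
        have hc : v 0 / v 1 = c := by simpa using h
        field_simp at hc
        rw [hc]; ring


/-- The number of points (with multiplicity) of the projective system `G`
lying on the hyperplane `ker φ`. -/
noncomputable def hypCount {F : Type*} [Field F] [DecidableEq F] {n k : ℕ}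
    (G : Fin n → Fin k → F) (φ : (Fin k → F) →ₗ[F] F) : ℕ :=
  (Finset.univ.filter fun i => φ (G i) = 0).card

/-- `G` is (the projective system of) a non-degenerate linear `[n,k,d]_q` code:
an `n`-multiset of nonzero points spanning `PG(k-1,q)`, every hyperplane containing
at most `n - d` points, and some hyperplane (a secant) containing exactly `n - d`. -/
def IsCodePS (F : Type*) [Field F] [DecidableEq F] (n k d : ℕ)
    (G : Fin n → Fin k → F) : Prop :=
  0 < d ∧ (∀ i, G i ≠ 0) ∧ Submodule.span F (Set.range G) = ⊤ ∧
  (∀ φ : (Fin k → F) →ₗ[F] F, φ ≠ 0 → hypCount G φ + d ≤ n) ∧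
  (∃ φ : (Fin k → F) →ₗ[F] F, φ ≠ 0 ∧ hypCount G φ + d = n)

/-- If a `(k-3)`-flat `Λ` (a linear subspace `W` of dimension `k-2`) meets the
projective system of an `[n,k,d]_q` A^sMDS code, `k ≥ 3`, `s > 0`, in `k-2+a` points
(with multiplicity), then `n ≤ (s+1-a)(q+1) + k - 2 + a`. -/
theorem flat_meeting_bound (F : Type*) [Field F] [Fintype F] [DecidableEq F]
    (n k d s a : ℕ) (G : Fin n → Fin k → F)
    (hk : 3 ≤ k) (hspos : 0 < s)
    (hG : IsCodePS F n k d G) (hs : d + k + s = n + 1)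
    (W : Submodule F (Fin k → F)) (hW : Module.finrank F ↥W = k - 2)
    (hmeet : Nat.card {i : Fin n // G i ∈ W} = k - 2 + a) :
    n + 2 ≤ (s + 1 - a) * (Fintype.card F + 1) + k + a := by
  classical
  obtain ⟨hd, hne, hspan, hbound, -⟩ := hG
  -- the quotient is 2-dimensional
  have hQ : Module.finrank F ((Fin k → F) ⧸ W) = 2 := by
    have h := Submodule.finrank_quotient_add_finrank W
    have hk' : Module.finrank F (Fin k → F) = k := Module.finrank_fin_fun F
    omega
  let b : Module.Basis (Fin 2) F ((Fin k → F) ⧸ W) := Module.finBasisOfFinrankEq F _ hQ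
  let e : ((Fin k → F) ⧸ W) ≃ₗ[F] (Fin 2 → F) := b.equivFun
  let π : (Fin k → F) →ₗ[F] (Fin 2 → F) := e.toLinearMap ∘ₗ W.mkQ
  have hker : ∀ x, π x = 0 ↔ x ∈ W := by
    intro x
    simp only [π, LinearMap.comp_apply, LinearEquiv.coe_coe,
      LinearEquiv.map_eq_zero_iff, Submodule.mkQ_apply, Submodule.Quotient.mk_eq_zero]
  have hsurj : Function.Surjective π := e.surjective.comp (Submodule.mkQ_surjective W)
  -- the q+1 hyperplanes through W
  let φ : Option F → ((Fin k → F) →ₗ[F] F) := fun t => (psiAux F t) ∘ₗ π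
  have hφne : ∀ t, φ t ≠ 0 := by
    intro t
    obtain ⟨u, hu⟩ : ∃ u : Fin 2 → F, psiAux F t u ≠ 0 := by
      cases t with
      | none => exact ⟨fun _ => 1, by simp [psiAux_none]⟩
      | some c => exact ⟨![1, 0], by simp [psiAux_some]⟩
    obtain ⟨x, hx⟩ := hsurj u
    intro h
    apply hu
    have := DFunLike.congr_fun h x
    simpa [φ, hx] using this
  -- counting sets
  set A : Finset (Fin n) := Finset.univ.filter (fun i => G i ∈ W) with hAdef
  set B : Finset (Fin n) := Finset.univ.filter (fun i => G i ∉ W) with hBdef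
  have hA : A.card = k - 2 + a := by
    rw [← hmeet, Nat.card_eq_fintype_card, Fintype.card_subtype]
  have hAB : A.card + B.card = n := by
    simpa using Finset.card_filter_add_card_filter_not
      (s := (Finset.univ : Finset (Fin n))) (p := fun i => G i ∈ W)
  -- class function
  let cls : Fin n → Option F := fun i => clsAux (π (G i))
  -- for each class t, points of B in class t together with A lie on hyperplane φ t
  have hfiber : ∀ t : Option F,
      A.card + (B.filter fun i => cls i = t).card ≤ hypCount G (φ t) := by
    intro t
    rw [← Finset.card_union_of_disjoint]
    · apply Finset.card_le_card
      intro i hi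
      simp only [Finset.mem_union, hAdef, hBdef, Finset.mem_filter, Finset.mem_univ,
        true_and] at hi ⊢
      rcases hi with hi | ⟨hi, hcl⟩
      · have : π (G i) = 0 := (hker _).mpr hi
        simp [φ, this]
      · have hnz : π (G i) ≠ 0 := fun h => hi ((hker _).mp h)
        have := (psiAux_zero_iff hnz t).mpr hcl
        simpa [φ] using this
    · exact (Finset.disjoint_filter_filter_not Finset.univ Finset.univ
        (fun i => G i ∈ W)).mono_right (Finset.filter_subset _ _)
  have hhyp : ∀ t, hypCount G (φ t) + d ≤ n := fun t => hbound _ (hφne t)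
  -- a ≤ s + 1
  have ha : a ≤ s + 1 := by
    have h1 := hfiber none
    have h2 := hhyp none
    omega
  -- each fiber of B has at most s + 1 - a points
  have hBt : ∀ t : Option F, (B.filter fun i => cls i = t).card ≤ s + 1 - a := by
    intro t
    have h1 := hfiber t
    have h2 := hhyp t
    omega
  -- B partitions into fibers
  have hBsum : B.card = ∑ t : Option F, (B.filter fun i => cls i = t).card :=
    Finset.card_eq_sum_card_fiberwise (fun i _ => Finset.mem_univ (cls i))
  have hB : B.card ≤ (s + 1 - a) * (Fintype.card F + 1) := by
    rw [hBsum]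
    calc ∑ t : Option F, (B.filter fun i => cls i = t).card
        ≤ ∑ _t : Option F, (s + 1 - a) := Finset.sum_le_sum (fun t _ => hBt t)
      _ = (s + 1 - a) * (Fintype.card F + 1) := by
          simp [Finset.sum_const, Fintype.card_option, mul_comm]
  omega
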